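/- Let A, P be n×n complex matrices, B an n×2 matrix, C a 2×n matrix, satisfying the Sylvester equation AP + PA = BC with P invertible, and let λ ∈ ℂ be such that λI + iA and λI − iA are invertible. Then det(I₂ + iC·(λI − iA)⁻¹·P⁻¹·B) = det(λI + iA) / det(λI − iA). -/

import Mathlib

open Matrix Complex

/-- with AP + PA = BC, P invertible, and λI ± iA invertible,
det(I₂ + iC(λI−iA)⁻¹P⁻¹B) = det(λI+iA)/det(λI−iA). -/
theorem det_transmission_coefficient (n : ℕ)
    (A P : Matrix (Fin n) (Fin n) ℂ)
    (B : Matrix (Fin n) (Fin 2) ℂ) (C : Matrix (Fin 2) (Fin n) ℂ)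
    (hSyl : A * P + P * A = B * C) (hP : IsUnit P)
    (lam : ℂ)
    (hplus : IsUnit (lam • (1 : Matrix (Fin n) (Fin n) ℂ) + Complex.I • A))
    (hminus : IsUnit (lam • (1 : Matrix (Fin n) (Fin n) ℂ) - Complex.I • A)) :
    ((1 : Matrix (Fin 2) (Fin 2) ℂ) +
        Complex.I • (C * (lam • (1 : Matrix (Fin n) (Fin n) ℂ) - Complex.I • A)⁻¹ * P⁻¹ * B)).det
      = (lam • (1 : Matrix (Fin n) (Fin n) ℂ) + Complex.I • A).det /
        (lam • (1 : Matrix (Fin n) (Fin n) ℂ) - Complex.I • A).det := by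
  set N := lam • (1 : Matrix (Fin n) (Fin n) ℂ) + Complex.I • A with hN
  set M := lam • (1 : Matrix (Fin n) (Fin n) ℂ) - Complex.I • A with hMdef
  have hPdet : IsUnit P.det := (isUnit_iff_isUnit_det P).mp hP
  have hMdet : IsUnit M.det := (isUnit_iff_isUnit_det M).mp hminus
  have hPinv : P⁻¹ * P = 1 := nonsing_inv_mul P hPdet
  have hMinv : M⁻¹ * M = 1 := nonsing_inv_mul M hMdet
  have h1 : N * P = P * M + Complex.I • (B * C) := by
    rw [← hSyl, hN, hMdef]
    simp only [add_mul, mul_sub, mul_add, smul_mul_assoc, mul_smul_comm,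
      one_mul, mul_one, smul_add]
    abel
  have key : (1 : Matrix (Fin n) (Fin n) ℂ) + (Complex.I • (M⁻¹ * P⁻¹ * B)) * C
      = M⁻¹ * (P⁻¹ * (N * P)) := by
    rw [h1, mul_add, mul_add]
    rw [show P⁻¹ * (P * M) = M by rw [← mul_assoc, hPinv, one_mul]]
    rw [hMinv]
    simp only [Matrix.smul_mul, Matrix.mul_smul, Matrix.mul_assoc]
  have hsmul : Complex.I • (C * M⁻¹ * P⁻¹ * B)
      = C * (Complex.I • (M⁻¹ * P⁻¹ * B)) := by
    simp only [Matrix.smul_mul, Matrix.mul_smul, Matrix.mul_assoc]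
  rw [hsmul, det_one_add_mul_comm, key]
  simp only [det_mul, det_nonsing_inv]
  simp only [Ring.inverse_eq_inv']
  field_simp [hMdet.ne_zero, hPdet.ne_zero]
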